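/- If in an iterative algorithm each iteration replaces the current polyhedral relaxation Xₖ by a tighter one X_{k+1} ⊆ Xₖ with X_{k+1} ⊇ conv(X), and at each iteration the Lagrangian relaxation at the optimal dual price admits an optimal solution with binary integer-designated coordinates, then the sequence of uplift payments Uₖ = Z_QIP − Z_{Cₖ}(γ̄ₖ) is non-increasing and bounded below by the minimum uplift payment U* = Z_QIP − min{cᵀx : Ex ≥ p, x ∈ conv(X)}; hence (Uₖ) converges. -/
import Mathlib


/-- Along an iterative algorithm with tighter and tighter polyhedral
relaxations `conv(X) ⊆ X_{k+1} ⊆ Xₖ` (each Lagrangian relaxation having a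
binary-optimal solution), the uplift payments `Uₖ = Z_QIP − Z_{Cₖ}(γ̄ₖ)` are
non-increasing and bounded below by the minimum uplift payment
`U* = Z_QIP − min{cᵀx : Ex ≥ p, x ∈ conv(X)}`; hence `(Uₖ)` converges. -/
theorem stmt5 {n n₁ pd : ℕ}
    (E : Matrix (Fin pd) (Fin n) ℝ) (p : Fin pd → ℝ) (c : Fin n → ℝ)
    (X : Set (Fin n → ℝ)) (Xk : ℕ → Set (Fin n → ℝ)) (γ : ℕ → Fin pd → ℝ)
    (ZQIP Zconv : ℝ) (ZC : ℕ → ℝ)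
    (hXbin : ∀ x ∈ X, ∀ i : Fin n, (i : ℕ) < n₁ → x i = 0 ∨ x i = 1)
    (hnest : ∀ k, Xk (k + 1) ⊆ Xk k)
    (hconv : ∀ k, convexHull ℝ X ⊆ Xk k)
    -- Z_QIP
    (hZQIP : IsLeast {v : ℝ | ∃ x ∈ X, p ≤ E.mulVec x ∧ v = ∑ i, c i * x i} ZQIP)
    -- tightened LP relaxations `Z_{Cₖ}`
    (hZC : ∀ k, IsLeast {v : ℝ | ∃ x ∈ Xk k, p ≤ E.mulVec x ∧
      v = ∑ i, c i * x i} (ZC k))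
    -- strong duality: `Z_{Cₖ}(γ̄ₖ) = Z_{Cₖ}` at the optimal dual vector `γ̄ₖ`
    (hLag : ∀ k, IsLeast {v : ℝ | ∃ x ∈ Xk k,
      v = (∑ i, c i * x i) + ∑ j, γ k j * (p j - E.mulVec x j)} (ZC k))
    -- at each iteration the Lagrangian relaxation has a binary-optimal solution
    (hbin : ∀ k, ∃ x ∈ Xk k, (∀ i : Fin n, (i : ℕ) < n₁ → x i = 0 ∨ x i = 1) ∧
      (∑ i, c i * x i) + ∑ j, γ k j * (p j - E.mulVec x j) = ZC k)
    -- the LP over conv(X)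
    (hZconv : IsLeast {v : ℝ | ∃ x ∈ convexHull ℝ X, p ≤ E.mulVec x ∧
      v = ∑ i, c i * x i} Zconv) :
    Antitone (fun k => ZQIP - ZC k) ∧
    (∀ k, ZQIP - Zconv ≤ ZQIP - ZC k) ∧
    ∃ l : ℝ, Filter.Tendsto (fun k => ZQIP - ZC k) Filter.atTop (nhds l) := by
  have hmono : Monotone ZC := by
    apply monotone_nat_of_le_succ
    intro k
    obtain ⟨x, hx, hfeas, hv⟩ := (hZC (k + 1)).1
    exact (hZC k).2 ⟨x, hnest k hx, hfeas, hv⟩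
  have hub : ∀ k, ZC k ≤ Zconv := by
    intro k
    obtain ⟨x, hx, hfeas, hv⟩ := hZconv.1
    exact (hZC k).2 ⟨x, hconv k hx, hfeas, hv⟩
  have hanti : Antitone (fun k => ZQIP - ZC k) := fun a b hab => by
    exact sub_le_sub_left (hmono hab) ZQIP
  refine ⟨hanti, fun k => by linarith [hub k], ?_⟩
  refine ⟨⨅ k, (ZQIP - ZC k), tendsto_atTop_ciInf hanti ?_⟩
  exact ⟨ZQIP - Zconv, fun v ⟨k, hk⟩ => by simp only [← hk]; linarith [hub k]⟩
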